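/- Let γ ∈ (0,2) and set α := 1 − 2^{γ−1}, so α ∈ (−1,1), with α ≥ 0 iff γ ≤ 1. Define κ₁(γ) := (1+α²)/(1+α) if γ ≤ 1, and κ₁(γ) := 1 + α = 2 − 2^{γ−1} if γ > 1. Then for every c ∈ [−1,1] one has (1 + α²·c)/(1 + α·c) ≥ κ₁(γ), with equality at c = 1 when γ ≤ 1 and at c = −1 when γ > 1; moreover κ₁(1) = 1 and κ₁(γ) < 1 for every γ ≠ 1. Consequently the single-mode Bakry–Émery curvature of f(x) = cos(nx + φ) under the γ-stable generator equals κ₁(γ), and is < 1 exactly when γ ≠ 1. -/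
import Mathlib


/-- **Single-mode curvature formula.** With `α = 1 - 2^{γ-1}` one has
`α ∈ (-1,1)` and `α ≥ 0 ↔ γ ≤ 1`. Setting `κ₁(γ) = (1+α²)/(1+α)` for `γ ≤ 1`
and `κ₁(γ) = 1 + α = 2 - 2^{γ-1}` for `γ > 1`, the function
`c ↦ (1 + α²c)/(1 + αc)` on `[-1,1]` is bounded below by `κ₁(γ)`, with
equality at `c = 1` when `γ ≤ 1` and at `c = -1` when `γ > 1`; moreover
`κ₁(1) = 1` and `κ₁(γ) < 1` for `γ ≠ 1`. This is the Bakry–Émery curvature of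
a single mode `cos(nx + φ)` under the γ-stable generator. -/
theorem single_mode_curvature (γ : ℝ) (hγ : γ ∈ Set.Ioo (0 : ℝ) 2)
    (α κ₁ : ℝ) (hα : α = 1 - (2 : ℝ) ^ (γ - 1))
    (hκ : κ₁ = if γ ≤ 1 then (1 + α ^ 2) / (1 + α) else 1 + α) :
    α ∈ Set.Ioo (-1 : ℝ) 1 ∧
    (0 ≤ α ↔ γ ≤ 1) ∧
    (∀ c ∈ Set.Icc (-1 : ℝ) 1, κ₁ ≤ (1 + α ^ 2 * c) / (1 + α * c)) ∧
    (γ ≤ 1 → (1 + α ^ 2 * 1) / (1 + α * 1) = κ₁) ∧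
    (1 < γ → (1 + α ^ 2 * (-1)) / (1 + α * (-1)) = κ₁) ∧
    (γ = 1 → κ₁ = 1) ∧
    (γ ≠ 1 → κ₁ < 1) := by
  obtain ⟨hγ0, hγ2⟩ := hγ
  have h1 : ((2 : ℝ) ^ (γ - 1)) < 2 := by
    calc (2 : ℝ) ^ (γ - 1) < (2 : ℝ) ^ (1 : ℝ) :=
          Real.rpow_lt_rpow_left_iff (by norm_num) |>.mpr (by linarith)
      _ = 2 := Real.rpow_one 2
  have h2 : (1 / 2 : ℝ) < (2 : ℝ) ^ (γ - 1) := by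
    calc (1 / 2 : ℝ) = (2 : ℝ) ^ (-1 : ℝ) := by
          rw [Real.rpow_neg_one]; norm_num
      _ < (2 : ℝ) ^ (γ - 1) :=
          Real.rpow_lt_rpow_left_iff (by norm_num) |>.mpr (by linarith)
  have hmem : α ∈ Set.Ioo (-1 : ℝ) 1 := ⟨by rw [hα]; linarith, by rw [hα]; linarith⟩
  obtain ⟨hαm1, hα1⟩ := hmem
  have hiff : 0 ≤ α ↔ γ ≤ 1 := by
    rw [hα, sub_nonneg]
    constructor
    · intro h
      by_contra hc
      push_neg at hc
      have : (1:ℝ) < 2 ^ (γ - 1) :=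
        (Real.one_lt_rpow_iff_of_pos (by norm_num)).mpr (Or.inl ⟨by norm_num, by linarith⟩)
      linarith
    · intro h
      calc (2 : ℝ) ^ (γ - 1) ≤ (2 : ℝ) ^ (0 : ℝ) :=
            Real.rpow_le_rpow_left_iff (by norm_num) |>.mpr (by linarith)
        _ = 1 := Real.rpow_zero 2
  refine ⟨⟨hαm1, hα1⟩, hiff, ?_, ?_, ?_, ?_, ?_⟩
  · intro c hc
    obtain ⟨hc1, hc2⟩ := hc
    have hpos : 0 < 1 + α * c := by nlinarith
    rw [hκ]
    split_ifs with h
    · have hα0 : 0 ≤ α := hiff.mpr h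
      rw [div_le_div_iff₀ (by nlinarith) hpos]
      nlinarith [mul_nonneg hα0 (sub_nonneg.mpr hc2), sq_nonneg α]
    · push_neg at h
      have hα0 : α < 0 := by by_contra hc; push_neg at hc; exact absurd (hiff.mp hc) (not_le.mpr h)
      rw [le_div_iff₀ hpos]
      nlinarith [mul_nonpos_of_nonpos_of_nonneg hα0.le (by linarith : (0:ℝ) ≤ 1 + c)]
  · intro h
    rw [hκ, if_pos h]; ring_nf
  · intro h
    rw [hκ, if_neg (not_le.mpr h)]
    have hα0 : α < 0 := by by_contra hc; push_neg at hc; exact absurd (hiff.mp hc) (not_le.mpr h)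
    rw [div_eq_iff (ne_of_gt (by nlinarith : (0:ℝ) < 1 + α * (-1)))]
    ring
  · intro h
    subst h
    simp only [le_refl, if_true] at hκ
    have : α = 0 := by rw [hα]; norm_num
    rw [hκ, this]; norm_num
  · intro h
    rw [hκ]
    split_ifs with h1'
    · have hγlt : γ < 1 := lt_of_le_of_ne h1' h
      have hα0 : 0 < α := by
        rw [hα, sub_pos]
        calc (2 : ℝ) ^ (γ - 1) < (2 : ℝ) ^ (0 : ℝ) :=
              Real.rpow_lt_rpow_left_iff (by norm_num) |>.mpr (by linarith)
          _ = 1 := Real.rpow_zero 2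
      rw [div_lt_one (by linarith)]
      nlinarith
    · push_neg at h1'
      have hα0 : α < 0 := by
        by_contra hc; push_neg at hc; exact absurd (hiff.mp hc) (not_le.mpr h1')
      linarith
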